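/- Let C ⊆ ℝ² be homogenization-convex and let ψ, φ : ℝ² → ℝ be linear forms such that φ(x₀) > 0 for some x₀ ∈ C. Then ψ(x) ≥ 0 for all x ∈ C with φ(x) ≥ 0 if and only if there exists ξ ≥ 0 such that ψ(x) − ξφ(x) ≥ 0 for all x ∈ C. -/

import Mathlib

/-- The homogeneous hull of a set: `{τ • x : τ ≥ 0, x ∈ C}`. -/
def homHull (C : Set (EuclideanSpace ℝ (Fin 2))) : Set (EuclideanSpace ℝ (Fin 2)) :=
  {y | ∃ τ : ℝ, 0 ≤ τ ∧ ∃ x ∈ C, y = τ • x}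

/-- Two-dimensional S-Lemma for linear forms on a homogenization-convex set. -/
theorem linear_S_lemma_2D (C : Set (EuclideanSpace ℝ (Fin 2)))
    (hC : Convex ℝ (closure (homHull C)))
    (ψ φ : EuclideanSpace ℝ (Fin 2) →ₗ[ℝ] ℝ)
    (x₀ : EuclideanSpace ℝ (Fin 2)) (hx₀ : x₀ ∈ C) (hφx₀ : 0 < φ x₀) :
    (∀ x ∈ C, 0 ≤ φ x → 0 ≤ ψ x) ↔
      ∃ ξ : ℝ, 0 ≤ ξ ∧ ∀ x ∈ C, 0 ≤ ψ x - ξ * φ x := by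
  constructor
  · intro h
    set K := closure (homHull C) with hK
    have hcontψ : Continuous ψ := ψ.continuous_of_finiteDimensional
    have hcontφ : Continuous φ := φ.continuous_of_finiteDimensional
    have hCK : C ⊆ K := fun x hx =>
      subset_closure ⟨1, zero_le_one, x, hx, (one_smul ℝ x).symm⟩
    have hx₀K : x₀ ∈ K := hCK hx₀
    have hψx₀ : 0 ≤ ψ x₀ := h x₀ hx₀ hφx₀.le
    -- on the hull
    have hHull : ∀ u ∈ homHull C, 0 ≤ φ u → 0 ≤ ψ u := by
      rintro u ⟨τ, hτ, x, hx, rfl⟩ hφ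
      rcases hτ.eq_or_lt with h0 | h0
      · simp [← h0]
      · rw [map_smul, smul_eq_mul] at hφ ⊢
        have hφx : 0 ≤ φ x := nonneg_of_mul_nonneg_right hφ h0
        exact mul_nonneg h0.le (h x hx hφx)
    -- Lemma A: on K, φ > 0 → ψ ≥ 0
    have hA : ∀ y ∈ K, 0 < φ y → 0 ≤ ψ y := by
      intro y hy hφ
      obtain ⟨u, hu, hlim⟩ := mem_closure_iff_seq_limit.mp hy
      have hφlim : Filter.Tendsto (fun n => φ (u n)) Filter.atTop (nhds (φ y)) :=
        (hcontφ.tendsto y).comp hlim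
      have hψlim : Filter.Tendsto (fun n => ψ (u n)) Filter.atTop (nhds (ψ y)) :=
        (hcontψ.tendsto y).comp hlim
      have hev : ∀ᶠ n in Filter.atTop, 0 ≤ ψ (u n) := by
        filter_upwards [hφlim.eventually (eventually_gt_nhds hφ)] with n hn
        exact hHull (u n) (hu n) hn.le
      exact ge_of_tendsto hψlim hev
    -- Lemma B: on K, φ = 0 → ψ ≥ 0
    have hB : ∀ y ∈ K, φ y = 0 → 0 ≤ ψ y := by
      intro y hy hφ
      by_contra hneg
      push_neg at hneg
      have hd : 0 < ψ x₀ - ψ y := by linarith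
      set t : ℝ := -ψ y / (2 * (ψ x₀ - ψ y)) with htdef
      have ht0 : 0 < t := div_pos (by linarith) (by linarith)
      have ht1 : t ≤ 1 / 2 := by
        rw [htdef, div_le_iff₀ (by linarith)]
        linarith
      have hzK : (1 - t) • y + t • x₀ ∈ K :=
        hC hy hx₀K (by linarith) ht0.le (by ring)
      have hφz : 0 < φ ((1 - t) • y + t • x₀) := by
        simp only [map_add, map_smul, smul_eq_mul, hφ]
        nlinarith
      have hψz : ψ ((1 - t) • y + t • x₀) = ψ y / 2 := by
        simp only [map_add, map_smul, smul_eq_mul]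
        field_simp [htdef]
        have e : t * (2 * (ψ x₀ - ψ y)) = -ψ y := by
          rw [htdef]; exact div_mul_cancel₀ _ (ne_of_gt (by linarith))
        linear_combination e
      have := hA _ hzK hφz
      rw [hψz] at this
      linarith
    -- Cross inequality: ratios are ordered
    have hratio : ∀ w ∈ K, ∀ y ∈ K, φ w < 0 → 0 < φ y → ψ w / φ w ≤ ψ y / φ y := by
      intro w hw y hy hφw hφy
      set lam : ℝ := φ y / (φ y - φ w) with hlamdef
      have hden : 0 < φ y - φ w := by linarith
      have hlam0 : 0 < lam := div_pos hφy hden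
      have hlam1 : lam < 1 := by
        rw [hlamdef, div_lt_one hden]; linarith
      have hzK : lam • w + (1 - lam) • y ∈ K :=
        hC hw hy hlam0.le (by linarith) (by ring)
      have hφz : φ (lam • w + (1 - lam) • y) = 0 := by
        simp only [map_add, map_smul, smul_eq_mul]
        field_simp [hlamdef]
        have e : lam * (φ y - φ w) = φ y := by rw [hlamdef]; exact div_mul_cancel₀ _ hden.ne'
        linear_combination (-1 : ℝ) * e
      have hψz := hB _ hzK hφz
      have hψz' : ψ (lam • w + (1 - lam) • y) =
          (φ y * ψ w - φ w * ψ y) / (φ y - φ w) := by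
        simp only [map_add, map_smul, smul_eq_mul]
        field_simp [hlamdef]
        have e : lam * (φ y - φ w) = φ y := by rw [hlamdef]; exact div_mul_cancel₀ _ hden.ne'
        linear_combination (ψ w - ψ y) * e
      rw [hψz'] at hψz
      have hcross : 0 ≤ φ y * ψ w - φ w * ψ y := by
        have := (le_div_iff₀ hden).mp hψz
        linarith
      rw [div_le_iff_of_neg hφw, div_mul_eq_mul_div, div_le_iff₀ hφy]
      nlinarith
    -- define ξ as a supremum of ratios
    set T : Set ℝ := insert 0 {r | ∃ y ∈ K, φ y < 0 ∧ r = ψ y / φ y} with hTdef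
    have hTne : T.Nonempty := ⟨0, Set.mem_insert 0 _⟩
    have hbdd : BddAbove T := by
      refine ⟨max 0 (ψ x₀ / φ x₀), ?_⟩
      rintro r (rfl | ⟨y, hy, hφy, rfl⟩)
      · exact le_max_left _ _
      · exact le_max_of_le_right (hratio y hy x₀ hx₀K hφy hφx₀)
    refine ⟨sSup T, le_csSup hbdd (Set.mem_insert 0 _), ?_⟩
    intro x hx
    have hxK : x ∈ K := hCK hx
    rw [sub_nonneg]
    rcases lt_trichotomy (φ x) 0 with hφx | hφx | hφx
    · have hmem : ψ x / φ x ∈ T := Set.mem_insert_iff.mpr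
        (Or.inr ⟨x, hxK, hφx, rfl⟩)
      have := le_csSup hbdd hmem
      rwa [div_le_iff_of_neg hφx] at this
    · rw [hφx, mul_zero]
      exact hB x hxK hφx
    · have hle : sSup T ≤ ψ x / φ x := by
        apply csSup_le hTne
        rintro r (rfl | ⟨y, hy, hφy, rfl⟩)
        · exact div_nonneg (hA x hxK hφx) hφx.le
        · exact hratio y hy x hxK hφy hφx
      rwa [le_div_iff₀ hφx] at hle
  · rintro ⟨ξ, hξ, hall⟩ x hx hφ
    have := hall x hx
    nlinarith
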